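/- arXiv:0811.4764 — 3 statements merged into one kernel-verified Lean document; each statement's English description precedes it below -/
import Mathlib

section
/- Let τ be a type and M a submonoid of the monoid Hyp(τ) of hypersubstitutions of type τ. Then for every set of identities Σ ⊆ W_τ(X)² and every class K ⊆ Alg(τ): (i) H_M Mod Σ = Mod χ_M^E[Σ], and (ii) H_M Id K = Id χ_M^A[K]. -/
/-!
Common framework: terms of a fixed type `τ = (ar i)_{i : I}`, algebras,
identities, hypersubstitutions, multi-hypersubstitutions and colorations,
following Denecke–Koppitz–Shtrakov, "Multi-hypersubstitutions and colored
solid varieties".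
-/

namespace ColoredSolid

/-- Terms of type `τ` (arities `ar`) over the countably infinite
variable set `X = {x₀, x₁, …}` (variables indexed by `ℕ`). -/
inductive Term (I : Type) (ar : I → ℕ) : Type
  | var : ℕ → Term I ar
  | app : (i : I) → (Fin (ar i) → Term I ar) → Term I ar

variable {I : Type} {ar : I → ℕ}

/-- The set of (indices of) variables occurring in a term. -/
def Term.varSet : Term I ar → Set ℕ
  | .var n => {n}
  | .app _ ts => ⋃ k, (ts k).varSet

/-- Simultaneous substitution of terms for variables. -/
def subst (θ : ℕ → Term I ar) : Term I ar → Term I ar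
  | .var n => θ n
  | .app i ts => .app i fun k => subst θ (ts k)

/-- Pad a `Fin (ar i)`-indexed family of terms to a total substitution. -/
def pad {i : I} (g : Fin (ar i) → Term I ar) : ℕ → Term I ar :=
  fun j => if h : j < ar i then g ⟨j, h⟩ else .var j

/-- The extension `σ̂` of a hypersubstitution to all terms. -/
def hat (σ : (i : I) → Term I ar) : Term I ar → Term I ar
  | .var n => .var n
  | .app i ts => subst (pad fun k => hat σ (ts k)) (σ i)

/-- A hypersubstitution is proper when each `σ(fᵢ)` is an `nᵢ`-ary term,
i.e. uses only the variables `x₀, …, x_{nᵢ-1}`. -/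
def Proper (σ : (i : I) → Term I ar) : Prop :=
  ∀ i, ∀ n ∈ (σ i).varSet, n < ar i

/-- `Hyp I ar` : the hypersubstitutions of type `τ`. -/
def Hyp (I : Type) (ar : I → ℕ) : Type := {σ : (i : I) → Term I ar // Proper σ}

/-- The identity hypersubstitution (as a raw function). -/
def hypIdFun : (i : I) → Term I ar := fun i => .app i fun k => .var k.val

lemma proper_hypIdFun : Proper (hypIdFun (I := I) (ar := ar)) := by
  intro i n hn
  simp only [hypIdFun, Term.varSet, Set.mem_iUnion, Set.mem_singleton_iff] at hn
  obtain ⟨k, rfl⟩ := hn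
  exact k.isLt

/-- The identity hypersubstitution `σ_id`. -/
def hypId : Hyp I ar := ⟨hypIdFun, proper_hypIdFun⟩

lemma varSet_subst (θ : ℕ → Term I ar) (t : Term I ar) :
    (subst θ t).varSet ⊆ ⋃ n ∈ t.varSet, (θ n).varSet := by
  induction t with
  | var n => simp [subst, Term.varSet]
  | app i ts ih =>
    intro m hm
    simp only [subst, Term.varSet, Set.mem_iUnion] at hm
    obtain ⟨k, hk⟩ := hm
    have := ih k hk
    simp only [Set.mem_iUnion, Term.varSet] at this ⊢
    obtain ⟨n, hn1, hn2⟩ := this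
    exact ⟨n, ⟨⟨k, hn1⟩, hn2⟩⟩

lemma varSet_hat {σ : (i : I) → Term I ar} (hσ : Proper σ) :
    ∀ t : Term I ar, (hat σ t).varSet ⊆ t.varSet := by
  intro t
  induction t with
  | var n => simp [hat]
  | app i ts ih =>
    intro m hm
    rw [hat] at hm
    have hmem := varSet_subst _ _ hm
    simp only [Set.mem_iUnion] at hmem
    obtain ⟨n, hn, hm2⟩ := hmem
    have hlt := hσ i n hn
    simp only [pad, dif_pos hlt] at hm2
    have := ih ⟨n, hlt⟩ hm2
    simp only [Term.varSet, Set.mem_iUnion]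
    exact ⟨⟨n, hlt⟩, this⟩

/-- Composition of hypersubstitutions (raw functions): `σ₁ ∘ₕ σ₂`. -/
def hypCompFun (σ₁ σ₂ : (i : I) → Term I ar) : (i : I) → Term I ar := fun i => hat σ₁ (σ₂ i)

lemma proper_hypCompFun {σ₁ σ₂ : (i : I) → Term I ar} (h₁ : Proper σ₁) (h₂ : Proper σ₂) :
    Proper (hypCompFun σ₁ σ₂) :=
  fun i n hn => h₂ i n (varSet_hat h₁ (σ₂ i) hn)

/-- Composition of hypersubstitutions: `σ₁ ∘ₕ σ₂ := σ̂₁ ∘ σ₂`. -/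
def hypComp (σ₁ σ₂ : Hyp I ar) : Hyp I ar :=
  ⟨hypCompFun σ₁.val σ₂.val, proper_hypCompFun σ₁.property σ₂.property⟩

/-- `M` is a submonoid of the monoid `Hyp(τ)` of all hypersubstitutions. -/
def IsSubmonoid (M : Set (Hyp I ar)) : Prop :=
  hypId ∈ M ∧ ∀ σ₁ ∈ M, ∀ σ₂ ∈ M, hypComp σ₁ σ₂ ∈ M

/-- An algebra of type `τ`: a (nonempty) carrier together with an
`nᵢ`-ary operation for every operation symbol `fᵢ`. -/
structure Alg (I : Type) (ar : I → ℕ) where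
  carrier : Type
  nonempty : Nonempty carrier
  op : ∀ i, (Fin (ar i) → carrier) → carrier

/-- Evaluation of a term in an algebra under a valuation of the variables. -/
def Alg.eval (A : Alg I ar) (v : ℕ → A.carrier) : Term I ar → A.carrier
  | .var n => v n
  | .app i ts => A.op i fun k => A.eval v (ts k)

/-- Identities `s ≈ t` are pairs of terms. -/
abbrev Eqn (I : Type) (ar : I → ℕ) := Term I ar × Term I ar

/-- The identity `e` holds in the algebra `A`. -/
def holds (A : Alg I ar) (e : Eqn I ar) : Prop :=
  ∀ v : ℕ → A.carrier, A.eval v e.1 = A.eval v e.2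

/-- `Id K` : the identities holding in every algebra of the class `K`. -/
def IdS (K : Set (Alg I ar)) : Set (Eqn I ar) := {e | ∀ A ∈ K, holds A e}

/-- `Mod Σ` : the class of algebras satisfying every identity of `Σ`. -/
def ModS (E : Set (Eqn I ar)) : Set (Alg I ar) := {A | ∀ e ∈ E, holds A e}

/-- `χ_M^E[Σ] = {σ̂[u] ≈ σ̂[v] | u ≈ v ∈ Σ, σ ∈ M}`. -/
def chiE (M : Set (Hyp I ar)) (E : Set (Eqn I ar)) : Set (Eqn I ar) :=
  {e | ∃ σ ∈ M, ∃ uv ∈ E, e = (hat σ.val uv.1, hat σ.val uv.2)}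

/-- The derived algebra `σ(𝒜)` (same carrier, operations `σ(fᵢ)^𝒜`). -/
noncomputable def derive (σ : (i : I) → Term I ar) (A : Alg I ar) : Alg I ar where
  carrier := A.carrier
  nonempty := A.nonempty
  op i args := A.eval
    (fun j => if h : j < ar i then args ⟨j, h⟩ else Classical.choice A.nonempty) (σ i)

/-- `χ_M^A[K] = {σ(𝒜) | 𝒜 ∈ K, σ ∈ M}`. -/
def chiA (M : Set (Hyp I ar)) (K : Set (Alg I ar)) : Set (Alg I ar) :=
  {B | ∃ σ ∈ M, ∃ A ∈ K, B = derive σ.val A}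

/-- `H_M Id K` : the `M`-hyperidentities of the class `K`. -/
def HId (M : Set (Hyp I ar)) (K : Set (Alg I ar)) : Set (Eqn I ar) :=
  {e | ∀ σ ∈ M, (hat σ.val e.1, hat σ.val e.2) ∈ IdS K}

/-- `H_M Mod Σ` : the algebras `M`-hypersatisfying every identity of `Σ`. -/
def HMod (M : Set (Hyp I ar)) (E : Set (Eqn I ar)) : Set (Alg I ar) :=
  {A | ∀ σ ∈ M, ∀ uv ∈ E, holds A (hat σ.val uv.1, hat σ.val uv.2)}

/-!  Colorations and multi-hypersubstitutions. -/

/-- `addresses t` : the set of addresses of occurrences of operation symbols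
in the term `t` (an address is the list of argument positions leading from
the root to the occurrence). -/
def addresses : Term I ar → Set (List ℕ)
  | .var _ => ∅
  | .app i ts => insert [] (⋃ k : Fin (ar i), (fun l => k.val :: l) '' addresses (ts k))

/-- A coloration `C` of `W_τ(X)` assigns to every term `t` a coloration
`α_t` of its addresses (only the values on `addresses t` matter). -/
def Coloration (I : Type) (ar : I → ℕ) : Type := Term I ar → List ℕ → ℕ

/-- A multi-hypersubstitution is a map `ρ : ℕ → Hyp(τ)`; here, its
underlying raw function is extended to the subterms of a term, tracking the
address of the current subterm, with colors given by `α`. -/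
def mhatAux (ρ : ℕ → (i : I) → Term I ar) (α : List ℕ → ℕ) : List ℕ → Term I ar → Term I ar
  | _, .var n => .var n
  | a, .app i ts =>
      subst (pad fun k => mhatAux ρ α (a ++ [k.val]) (ts k)) (ρ (α a) i)

/-- `ρ̂_C[t]` : application of the multi-hypersubstitution `ρ` to the term
`t`, colored by `C`. -/
def mhat (C : Coloration I ar) (ρ : ℕ → Hyp I ar) (t : Term I ar) : Term I ar :=
  mhatAux (fun n => (ρ n).val) (C t) [] t

/-- `χ_C^e[Σ] = {ρ̂_C[u] ≈ ρ̂_C[v] | u ≈ v ∈ Σ, ρ ∈ Hyp(τ)^ℕ}`. -/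
def chiCe (C : Coloration I ar) (E : Set (Eqn I ar)) : Set (Eqn I ar) :=
  {e | ∃ ρ : ℕ → Hyp I ar, ∃ uv ∈ E, e = (mhat C ρ uv.1, mhat C ρ uv.2)}

/-- The iterates `χ_C^{e,n}` of `χ_C^e` (with `χ_C^{e,0} = χ_C^e`). -/
def chiCiter (C : Coloration I ar) : ℕ → Set (Eqn I ar) → Set (Eqn I ar)
  | 0, E => chiCe C E
  | n + 1, E => chiCe C (chiCiter C n E)

/-- `χ_C^E[Σ] = ⋃ₙ χ_C^{e,n}[Σ]`. -/
def chiCE (C : Coloration I ar) (E : Set (Eqn I ar)) : Set (Eqn I ar) :=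
  ⋃ n, chiCiter C n E

/-- The derived algebra `ρ[𝒜]`, with operations
`fᵢ^{ρ[𝒜]} := (ρ̂_C[fᵢ(x₁,…,x_{nᵢ})])^𝒜`. -/
noncomputable def deriveC (C : Coloration I ar) (ρ : ℕ → Hyp I ar) (A : Alg I ar) :
    Alg I ar where
  carrier := A.carrier
  nonempty := A.nonempty
  op i args := A.eval
    (fun j => if h : j < ar i then args ⟨j, h⟩ else Classical.choice A.nonempty)
    (mhat C ρ (.app i fun k => .var k.val))

/-- `χ_C^A[K] = {ρ[𝒜] | 𝒜 ∈ K, ρ ∈ Hyp(τ)^ℕ}`. -/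
def chiCA (C : Coloration I ar) (K : Set (Alg I ar)) : Set (Alg I ar) :=
  {B | ∃ ρ : ℕ → Hyp I ar, ∃ A ∈ K, B = deriveC C ρ A}

/-- `CMod Σ = {𝒜 | χ_C^E[Σ] ⊆ Id 𝒜}`. -/
def CMod (C : Coloration I ar) (E : Set (Eqn I ar)) : Set (Alg I ar) :=
  {A | chiCE C E ⊆ {e | holds A e}}

/-- `CId K = {s ≈ t | χ_C^E[{s ≈ t}] ⊆ Id K}`. -/
def CId (C : Coloration I ar) (K : Set (Alg I ar)) : Set (Eqn I ar) :=
  {e | chiCE C {e} ⊆ IdS K}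

variable {I : Type} {ar : I → ℕ}

lemma eval_congr (A : Alg I ar) {v w : ℕ → A.carrier} (t : Term I ar)
    (h : ∀ n ∈ t.varSet, v n = w n) : A.eval v t = A.eval w t := by
  induction t with
  | var n => exact h n (by simp [Term.varSet])
  | app i ts ih =>
    simp only [Alg.eval]
    congr 1; funext k
    exact ih k fun n hn => h n (by simp only [Term.varSet, Set.mem_iUnion]; exact ⟨k, hn⟩)

lemma eval_subst (A : Alg I ar) (v : ℕ → A.carrier) (θ : ℕ → Term I ar) (t : Term I ar) :
    A.eval v (subst θ t) = A.eval (fun n => A.eval v (θ n)) t := by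
  induction t with
  | var n => rfl
  | app i ts ih => simp only [subst, Alg.eval]; congr 1; funext k; exact ih k

lemma eval_derive {σ : (i : I) → Term I ar} (hσ : Proper σ) (A : Alg I ar)
    (v : ℕ → A.carrier) (t : Term I ar) :
    (derive σ A).eval v t = A.eval v (hat σ t) := by
  induction t with
  | var n => rfl
  | app i ts ih =>
    simp only [Alg.eval, hat, derive, eval_subst]
    refine eval_congr A (σ i) fun n hn => ?_
    have hlt := hσ i n hn
    simp only [dif_pos hlt, pad]
    exact ih ⟨n, hlt⟩

lemma holds_derive {σ : (i : I) → Term I ar} (hσ : Proper σ) (A : Alg I ar)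
    (e : Eqn I ar) :
    holds (derive σ A) e ↔ holds A (hat σ e.1, hat σ e.2) := by
  unfold holds
  constructor
  · intro h v
    exact (eval_derive hσ A v e.1).symm.trans ((h v).trans (eval_derive hσ A v e.2))
  · intro h v
    exact (eval_derive hσ A v e.1).trans ((h v).trans (eval_derive hσ A v e.2).symm)

/-- Theorem 1.2 (i),(i'): for a submonoid `M` of `Hyp(τ)`,
`H_M Mod Σ = Mod χ_M^E[Σ]` and `H_M Id K = Id χ_M^A[K]`. -/
theorem hMMod_eq_mod_chiE_and_hMId_eq_id_chiA
    (M : Set (Hyp I ar)) (hM : IsSubmonoid M)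
    (E : Set (Eqn I ar)) (K : Set (Alg I ar)) :
    HMod M E = ModS (chiE M E) ∧ HId M K = IdS (chiA M K) := by
  constructor
  · ext A
    constructor
    · rintro h e ⟨σ, hσ, uv, huv, rfl⟩
      exact h σ hσ uv huv
    · rintro h σ hσ uv huv
      exact h _ ⟨σ, hσ, uv, huv, rfl⟩
  · ext e
    constructor
    · rintro h B ⟨σ, hσ, A, hA, rfl⟩
      exact (holds_derive σ.property A e).mpr (h σ hσ A hA)
    · rintro h σ hσ A hA
      exact (holds_derive σ.property A e).mp (h _ ⟨σ, hσ, A, hA, rfl⟩)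

end ColoredSolid
end

section
/- Let C be a coloration of W_τ(X), Σ ⊆ W_τ(X)² a set of identities and K ⊆ Alg(τ) a class of algebras. Then χ_C^E[Σ] ⊆ Id K if and only if χ_C^E[Σ] ⊆ Id χ_C^A[K]. -/
/-!
Common framework: terms of a fixed type `τ = (ar i)_{i : I}`, algebras,
identities, hypersubstitutions, multi-hypersubstitutions and colorations,
following Denecke–Koppitz–Shtrakov, "Multi-hypersubstitutions and colored
solid varieties".
-/

namespace ColoredSolid

variable {I : Type} {ar : I → ℕ}

variable {I : Type} {ar : I → ℕ}

lemma subst_var (t : Term I ar) : subst (fun n => .var n) t = t := by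
  induction t with
  | var n => rfl
  | app i ts ih => simp only [subst]; congr 1; funext k; exact ih k

lemma pad_var (i : I) : pad (fun k : Fin (ar i) => Term.var (I := I) (ar := ar) k.val)
    = fun n => Term.var n := by
  funext n; unfold pad; split <;> rfl

/-- The hypersubstitution implicitly used by `deriveC`. -/
def sigmaRho (C : Coloration I ar) (ρ : ℕ → Hyp I ar) : (i : I) → Term I ar :=
  fun i => (ρ (C (.app i fun k => .var k.val) [])).val i

lemma proper_sigmaRho (C : Coloration I ar) (ρ : ℕ → Hyp I ar) :
    Proper (sigmaRho C ρ) :=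
  fun i n hn => (ρ _).property i n hn

lemma mhat_app_vars (C : Coloration I ar) (ρ : ℕ → Hyp I ar) (i : I) :
    mhat C ρ (.app i fun k => .var k.val) = sigmaRho C ρ i := by
  show subst (pad fun k : Fin (ar i) =>
      mhatAux (fun n => (ρ n).val) _ ([] ++ [k.val]) (.var k.val)) _ = _
  have : (fun k : Fin (ar i) =>
      mhatAux (fun n => (ρ n).val) (C (.app i fun k => .var k.val)) ([] ++ [k.val])
        (Term.var k.val)) = fun k : Fin (ar i) => Term.var (I := I) (ar := ar) k.val := by
    funext k; rfl
  rw [this, pad_var, subst_var]; rfl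

lemma eval_deriveC (C : Coloration I ar) (ρ : ℕ → Hyp I ar) (A : Alg I ar)
    (t : Term I ar) (v : ℕ → A.carrier) :
    (deriveC C ρ A).eval v t = A.eval v (hat (sigmaRho C ρ) t) := by
  induction t with
  | var n => rfl
  | app i ts ih =>
    show (deriveC C ρ A).op i (fun k => (deriveC C ρ A).eval v (ts k))
        = A.eval v (subst (pad fun k => hat (sigmaRho C ρ) (ts k)) (sigmaRho C ρ i))
    rw [eval_subst]
    show A.eval _ (mhat C ρ (.app i fun k => .var k.val)) = _
    rw [mhat_app_vars]
    refine eval_congr A _ fun n hn => ?_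
    have hlt : n < ar i := proper_sigmaRho C ρ i n hn
    simp only [dif_pos hlt, pad, ih ⟨n, hlt⟩]

lemma mhatAux_const (σ : (i : I) → Term I ar) (α : List ℕ → ℕ) (a : List ℕ)
    (t : Term I ar) : mhatAux (fun _ => σ) α a t = hat σ t := by
  induction t generalizing a with
  | var n => rfl
  | app i ts ih =>
    simp only [mhatAux, hat]
    have : (fun k : Fin (ar i) => mhatAux (fun _ => σ) α (a ++ [k.val]) (ts k))
        = fun k => hat σ (ts k) := funext fun k => ih k _
    rw [this]

lemma chiCE_closed (C : Coloration I ar) (E : Set (Eqn I ar)) (σ : Hyp I ar)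
    {e : Eqn I ar} (he : e ∈ chiCE C E) :
    (hat σ.val e.1, hat σ.val e.2) ∈ chiCE C E := by
  obtain ⟨S, ⟨n, rfl⟩, hn⟩ := he
  refine Set.mem_iUnion.2 ⟨n + 1, ?_⟩
  refine ⟨fun _ => σ, e, hn, ?_⟩
  simp only [mhat, mhatAux_const]

lemma deriveC_hypId (C : Coloration I ar) (A : Alg I ar) :
    deriveC C (fun _ => hypId) A = A := by
  obtain ⟨carA, neA, opA⟩ := A
  unfold deriveC
  congr 1
  funext i args
  rw [mhat_app_vars]
  show Alg.eval _ _ (.app i fun k => .var k.val) = _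
  simp only [Alg.eval]
  congr 1
  funext k
  simp [Alg.eval, k.isLt]

/-- Lemma 3.9: `χ_C^E[Σ] ⊆ Id K` iff
`χ_C^E[Σ] ⊆ Id χ_C^A[K]`. -/
theorem chiCE_subset_id_iff_subset_id_chiCA
    (C : Coloration I ar) (E : Set (Eqn I ar)) (K : Set (Alg I ar)) :
    chiCE C E ⊆ IdS K ↔ chiCE C E ⊆ IdS (chiCA C K) := by
  constructor
  · intro h e he B hB
    obtain ⟨ρ, A, hA, rfl⟩ := hB
    intro v
    rw [eval_deriveC C ρ A e.1 v, eval_deriveC C ρ A e.2 v]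
    exact h (chiCE_closed C E ⟨sigmaRho C ρ, proper_sigmaRho C ρ⟩ he) A hA v
  · intro h e he A hA
    have : deriveC C (fun _ => hypId) A ∈ chiCA C K := ⟨fun _ => hypId, A, hA, rfl⟩
    have := h he _ this
    rwa [deriveC_hypId] at this

end ColoredSolid
end

section
/- Let C be a coloration of W_τ(X). Then for every class K ⊆ Alg(τ), χ_C^E[CId K] = CId K. -/
/-!
Common framework: terms of a fixed type `τ = (ar i)_{i : I}`, algebras,
identities, hypersubstitutions, multi-hypersubstitutions and colorations,
following Denecke–Koppitz–Shtrakov, "Multi-hypersubstitutions and colored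
solid varieties".
-/

namespace ColoredSolid

variable {I : Type} {ar : I → ℕ}

variable {I : Type} {ar : I → ℕ}

lemma mhatAux_hypId (α : List ℕ → ℕ) (t : Term I ar) :
    ∀ a, mhatAux (fun _ => hypIdFun) α a t = t := by
  induction t with
  | var n => intro a; rfl
  | app i ts ih =>
    intro a
    show subst (pad fun k => mhatAux (fun _ => hypIdFun) α (a ++ [k.val]) (ts k))
        (hypIdFun i) = _
    simp only [hypIdFun, subst]
    congr 1
    funext k
    show pad (fun k => mhatAux (fun _ => hypIdFun) α (a ++ [k.val]) (ts k)) k.val = ts k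
    simp only [pad, dif_pos k.isLt, Fin.eta]
    exact ih k _

lemma mhat_hypId (C : Coloration I ar) (t : Term I ar) :
    mhat C (fun _ => hypId) t = t :=
  mhatAux_hypId _ t []

lemma chiCe_mono (C : Coloration I ar) {E F : Set (Eqn I ar)} (h : E ⊆ F) :
    chiCe C E ⊆ chiCe C F := by
  rintro e ⟨ρ, uv, huv, rfl⟩
  exact ⟨ρ, uv, h huv, rfl⟩

lemma chiCiter_mono (C : Coloration I ar) (n : ℕ) {E F : Set (Eqn I ar)} (h : E ⊆ F) :
    chiCiter C n E ⊆ chiCiter C n F := by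
  induction n with
  | zero => exact chiCe_mono C h
  | succ n ih => exact chiCe_mono C ih

lemma chiCiter_comp (C : Coloration I ar) (m n : ℕ) (E : Set (Eqn I ar)) :
    chiCiter C m (chiCiter C n E) ⊆ chiCiter C (m + n + 1) E := by
  induction m with
  | zero => rw [Nat.zero_add]; exact fun e he => he
  | succ m ih =>
    have h : m + 1 + n + 1 = (m + n + 1) + 1 := by omega
    rw [h]; exact chiCe_mono C ih

lemma chiCiter_single (C : Coloration I ar) (n : ℕ) (E : Set (Eqn I ar)) :
    ∀ e' ∈ chiCiter C n E, ∃ e ∈ E, e' ∈ chiCiter C n {e} := by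
  induction n with
  | zero =>
    rintro e' ⟨ρ, uv, huv, rfl⟩
    exact ⟨uv, huv, ρ, uv, rfl, rfl⟩
  | succ n ih =>
    rintro e' ⟨ρ, uv, huv, rfl⟩
    obtain ⟨e, he, huv'⟩ := ih uv huv
    exact ⟨e, he, ρ, uv, huv', rfl⟩

/-- Lemma 3.10 (i): `χ_C^E[CId K] = CId K`. -/
theorem chiCE_cId (C : Coloration I ar) (K : Set (Alg I ar)) :
    chiCE C (CId C K) = CId C K := by
  apply Set.Subset.antisymm
  · intro e' he'
    obtain ⟨_, ⟨n, rfl⟩, hn⟩ := he'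
    obtain ⟨e, he, h1⟩ := chiCiter_single C n _ e' hn
    intro f hf
    obtain ⟨_, ⟨m, rfl⟩, hm⟩ := hf
    have h2 : f ∈ chiCiter C (m + n + 1) {e} :=
      chiCiter_comp C m n {e}
        (chiCiter_mono C m (Set.singleton_subset_iff.mpr h1) hm)
    exact he ⟨_, ⟨m + n + 1, rfl⟩, h2⟩
  · intro e he
    refine ⟨_, ⟨0, rfl⟩, fun _ => hypId, e, he, ?_⟩
    rw [mhat_hypId, mhat_hypId]

end ColoredSolid
end
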